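/- arXiv:1812.01657 — 2 statements merged into one kernel-verified Lean document; each statement's English description precedes it below -/
import Mathlib

section
/- Let E be a finite-dimensional real inner product space of dimension n ≥ 1, let B : E → E be a self-adjoint positive semidefinite linear map, let δₙ be the maximum of ⟨B x, x⟩ over unit vectors x ∈ E, and let F : E → E be a self-adjoint linear map. Then (trace(B ∘ F))² ≤ n · δₙ · trace(B ∘ F ∘ F). -/
open LinearMap

lemma trace_onb_aux {E : Type*} [NormedAddCommGroup E] [InnerProductSpace ℝ E]
    [FiniteDimensional ℝ E] {n : ℕ} (b : OrthonormalBasis (Fin n) ℝ E) (T : E →ₗ[ℝ] E) :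
    LinearMap.trace ℝ E T = ∑ i, (inner ℝ (T (b i)) (b i) : ℝ) := by
  rw [LinearMap.trace_eq_matrix_trace ℝ b.toBasis, Matrix.trace]
  simp [Matrix.diag, LinearMap.toMatrix_apply, OrthonormalBasis.coe_toBasis,
    OrthonormalBasis.repr_apply_apply, real_inner_comm]

/-- Cauchy–Schwarz trace inequality with the largest eigenvalue bound: if `B` is a
self-adjoint positive semidefinite endomorphism of an `n`-dimensional real inner
product space (`n ≥ 1`), `δₙ = max_{‖x‖=1} ⟨B x, x⟩`, and `F` is self-adjoint, then
`(trace (B ∘ F))² ≤ n · δₙ · trace (B ∘ F ∘ F)`. -/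
theorem trace_cauchy_schwarz_maxEigenvalue {E : Type*} [NormedAddCommGroup E]
    [InnerProductSpace ℝ E] [FiniteDimensional ℝ E]
    (hn : 1 ≤ Module.finrank ℝ E)
    (B F : E →ₗ[ℝ] E) (hB : B.IsSymmetric) (hBpos : ∀ x : E, 0 ≤ (inner ℝ (B x) x : ℝ))
    (hF : F.IsSymmetric) (δn : ℝ)
    (hδn : IsGreatest {r : ℝ | ∃ x : E, ‖x‖ = 1 ∧ (inner ℝ (B x) x : ℝ) = r} δn) :
    (LinearMap.trace ℝ E (B ∘ₗ F)) ^ 2 ≤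
      (Module.finrank ℝ E : ℝ) * δn * LinearMap.trace ℝ E (B ∘ₗ F ∘ₗ F) := by
  set n := Module.finrank ℝ E with hnd
  have hfr : Module.finrank ℝ E = n := rfl
  set b := hB.eigenvectorBasis hfr with hb
  set lam := hB.eigenvalues hfr with hlam
  have hunit : ∀ i, ‖b i‖ = 1 := fun i => (hB.eigenvectorBasis hfr).orthonormal.1 i
  have hBb : ∀ i, B (b i) = lam i • b i := fun i => hB.apply_eigenvectorBasis hfr i
  have hlam_eq : ∀ i, (inner ℝ (B (b i)) (b i) : ℝ) = lam i := by
    intro i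
    rw [hBb i, real_inner_smul_left, real_inner_self_eq_norm_sq, hunit i]
    ring
  have hlam_nonneg : ∀ i, 0 ≤ lam i := fun i => (hlam_eq i) ▸ hBpos (b i)
  have hlam_le : ∀ i, lam i ≤ δn := fun i =>
    hδn.2 ⟨b i, hunit i, hlam_eq i⟩
  have hδ_nonneg : 0 ≤ δn := le_trans (hlam_nonneg ⟨0, hn⟩) (hlam_le ⟨0, hn⟩)
  set a : Fin n → ℝ := fun i => (inner ℝ (F (b i)) (b i) : ℝ) with ha
  -- trace formulas
  have t1 : LinearMap.trace ℝ E (B ∘ₗ F) = ∑ i, lam i * a i := by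
    rw [trace_onb_aux b]
    refine Finset.sum_congr rfl fun i _ => ?_
    have : (inner ℝ (B (F (b i))) (b i) : ℝ) = inner ℝ (F (b i)) (B (b i)) := hB _ _
    rw [LinearMap.comp_apply, this, hBb i, real_inner_smul_right, ha]
  have t2 : LinearMap.trace ℝ E (B ∘ₗ F ∘ₗ F) = ∑ i, lam i * ‖F (b i)‖ ^ 2 := by
    rw [trace_onb_aux b]
    refine Finset.sum_congr rfl fun i _ => ?_
    have h1 : (inner ℝ (B (F (F (b i)))) (b i) : ℝ) = inner ℝ (F (F (b i))) (B (b i)) := hB _ _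
    have h2 : (inner ℝ (F (F (b i))) (b i) : ℝ) = inner ℝ (F (b i)) (F (b i)) := hF _ _
    simp only [LinearMap.comp_apply]
    rw [h1, hBb i, real_inner_smul_right, h2, real_inner_self_eq_norm_sq]
  rw [t1, t2]
  -- Cauchy-Schwarz
  have hcs : (∑ i, lam i * a i) ^ 2 ≤ (∑ i : Fin n, lam i) * (∑ i, lam i * (a i) ^ 2) := by
    have := Finset.sum_mul_sq_le_sq_mul_sq Finset.univ
      (fun i => Real.sqrt (lam i)) (fun i => Real.sqrt (lam i) * a i)
    calc (∑ i, lam i * a i) ^ 2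
        = (∑ i, Real.sqrt (lam i) * (Real.sqrt (lam i) * a i)) ^ 2 := by
          congr 1
          refine Finset.sum_congr rfl fun i _ => ?_
          rw [← mul_assoc, Real.mul_self_sqrt (hlam_nonneg i)]
      _ ≤ (∑ i, Real.sqrt (lam i) ^ 2) * (∑ i, (Real.sqrt (lam i) * a i) ^ 2) := this
      _ = (∑ i : Fin n, lam i) * (∑ i, lam i * (a i) ^ 2) := by
          congr 1
          · exact Finset.sum_congr rfl fun i _ => Real.sq_sqrt (hlam_nonneg i)
          · refine Finset.sum_congr rfl fun i _ => ?_
            rw [mul_pow, Real.sq_sqrt (hlam_nonneg i)]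
  refine hcs.trans ?_
  have hsum_lam : (∑ i : Fin n, lam i) ≤ (n : ℝ) * δn := by
    calc (∑ i : Fin n, lam i) ≤ ∑ _i : Fin n, δn := Finset.sum_le_sum fun i _ => hlam_le i
      _ = (n : ℝ) * δn := by simp [mul_comm]
  have hterm : (∑ i, lam i * (a i) ^ 2) ≤ ∑ i, lam i * ‖F (b i)‖ ^ 2 := by
    refine Finset.sum_le_sum fun i _ => ?_
    refine mul_le_mul_of_nonneg_left ?_ (hlam_nonneg i)
    have := real_inner_mul_inner_self_le (F (b i)) (b i)
    calc (a i) ^ 2 = inner ℝ (F (b i)) (b i) * inner ℝ (F (b i)) (b i) := by rw [ha, sq]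
      _ ≤ inner ℝ (F (b i)) (F (b i)) * (inner ℝ (b i) (b i) : ℝ) := this
      _ = ‖F (b i)‖ ^ 2 := by
          rw [real_inner_self_eq_norm_sq, real_inner_self_eq_norm_sq, hunit i]; ring
  refine mul_le_mul hsum_lam hterm ?_ ?_
  · exact Finset.sum_nonneg fun i _ => mul_nonneg (hlam_nonneg i) (sq_nonneg _)
  · positivity
end

section
/- Let α > 0 and K ≥ 0 be real numbers, and let λ be a real number such that t · (α · (log t)² − K) ≤ λ for every real t with 0 < t < 1. Then 2(α + √(α² + K·α)) · exp(−1 − √(1 + K/α)) ≤ λ. -/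
/-- Concluding step of the Li–Yau argument: if `λ` dominates `t(α(log t)² − K)` for
every `t ∈ (0,1)`, where `α > 0` and `K ≥ 0`, then
`2(α + √(α² + Kα)) · exp(−1 − √(1 + K/α)) ≤ λ`. -/
theorem liYau_eigenvalue_lowerBound (α K lam : ℝ) (hα : 0 < α) (hK : 0 ≤ K)
    (h : ∀ t : ℝ, 0 < t → t < 1 → t * (α * (Real.log t) ^ 2 - K) ≤ lam) :
    2 * (α + Real.sqrt (α ^ 2 + K * α)) * Real.exp (-1 - Real.sqrt (1 + K / α)) ≤ lam := by
  set r := Real.sqrt (1 + K / α) with hr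
  have hr0 : 0 ≤ r := Real.sqrt_nonneg _
  have hKα : 0 ≤ K / α := div_nonneg hK hα.le
  have hr2 : r ^ 2 = 1 + K / α := Real.sq_sqrt (by linarith)
  have hαr : Real.sqrt (α ^ 2 + K * α) = α * r := by
    have : α ^ 2 + K * α = (α * r) ^ 2 := by
      rw [mul_pow, hr2]; field_simp
    rw [this, Real.sqrt_sq (by positivity)]
  set t := Real.exp (-1 - r) with ht
  have ht0 : 0 < t := Real.exp_pos _
  have ht1 : t < 1 := by
    rw [ht]
    exact Real.exp_lt_one_iff.mpr (by linarith)
  have hlog : Real.log t = -1 - r := Real.log_exp _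
  have := h t ht0 ht1
  rw [hlog] at this
  have hkey : α * (-1 - r) ^ 2 - K = 2 * (α + Real.sqrt (α ^ 2 + K * α)) := by
    rw [hαr]
    have : α * r ^ 2 = α + K := by
      rw [hr2]; field_simp
    nlinarith [this]
  calc 2 * (α + Real.sqrt (α ^ 2 + K * α)) * t
      = t * (α * (-1 - r) ^ 2 - K) := by rw [hkey]; ring
    _ ≤ lam := this
end
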